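/- arXiv:1706.04776 — 2 statements merged into one kernel-verified Lean document; each statement's English description precedes it below -/
import Mathlib

section
/- For any real numbers θ_1, …, θ_T, writing M = |∑_{n=1}^T e(θ_n)| with e(θ)=exp(2πiθ), one has ∏_{n=1}^T |1 + e(θ_n)| ≤ 2^T exp(−c(T − M)) for some absolute constant c > 0; in particular, if M ≤ T/2 then the product is at most 2^T e^{−cT/2}. -/
/-- Auxiliary: for a unit complex number `z`, `‖1+z‖ ≤ 2 exp((Re z - 1)/4)`. -/
lemma stmt13_aux {z : ℂ} (hz : ‖z‖ = 1) :
    ‖1 + z‖ ≤ 2 * Real.exp ((z.re - 1) / 4) := by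
  have hsq : ‖1 + z‖ ^ 2 = 2 + 2 * z.re := by
    rw [← Complex.normSq_eq_norm_sq, Complex.normSq_add]
    have : Complex.normSq z = 1 := by
      rw [Complex.normSq_eq_norm_sq, hz]; norm_num
    simp [this, Complex.normSq_one]
    ring
  have h2 : (2 * Real.exp ((z.re - 1) / 4)) ^ 2 = 4 * Real.exp ((z.re - 1) / 2) := by
    rw [mul_pow, ← Real.exp_nat_mul]
    norm_num
    ring_nf
  have hle : ‖1 + z‖ ^ 2 ≤ (2 * Real.exp ((z.re - 1) / 4)) ^ 2 := by
    rw [hsq, h2]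
    have := Real.add_one_le_exp ((z.re - 1) / 2)
    nlinarith [this]
  have hpos : (0:ℝ) ≤ 2 * Real.exp ((z.re - 1) / 4) := by positivity
  exact (pow_le_pow_iff_left₀ (norm_nonneg _) hpos two_ne_zero).mp hle

/-- There is an absolute constant `c > 0` such that for any reals `θ_1,…,θ_T`, writing
`M = |∑ e(θ_n)|`, one has `∏ |1 + e(θ_n)| ≤ 2^T exp(−c(T − M))`; in particular if `M ≤ T/2`
then the product is at most `2^T e^{−cT/2}`. -/
theorem stmt13 : ∃ c : ℝ, 0 < c ∧ ∀ (T : ℕ) (θ : Fin T → ℝ),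
    ((∏ n, ‖(1 : ℂ) + Complex.exp (2 * Real.pi * Complex.I * (θ n : ℂ))‖)
        ≤ 2 ^ T * Real.exp (-c * ((T : ℝ) -
            ‖∑ n, Complex.exp (2 * Real.pi * Complex.I * (θ n : ℂ))‖))) ∧
    (‖∑ n, Complex.exp (2 * Real.pi * Complex.I * (θ n : ℂ))‖ ≤ (T : ℝ) / 2 →
      (∏ n, ‖(1 : ℂ) + Complex.exp (2 * Real.pi * Complex.I * (θ n : ℂ))‖)
        ≤ 2 ^ T * Real.exp (-c * (T : ℝ) / 2)) := by
  refine ⟨1/4, by norm_num, fun T θ => ?_⟩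
  set z : Fin T → ℂ := fun n => Complex.exp (2 * Real.pi * Complex.I * (θ n : ℂ)) with hzdef
  have hnorm : ∀ n, ‖z n‖ = 1 := by
    intro n
    rw [hzdef]
    simp only [Complex.norm_exp]
    have : (2 * (Real.pi:ℂ) * Complex.I * (θ n : ℂ)).re = 0 := by simp
    rw [this, Real.exp_zero]
  set M := ‖∑ n, z n‖ with hM
  have hMre : ∑ n, (z n).re ≤ M := by
    have h1 : ∑ n, (z n).re = (∑ n, z n).re := by rw [Complex.re_sum]
    rw [h1]
    exact (Complex.re_le_norm _).trans (le_of_eq rfl)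
  have key : (∏ n, ‖(1:ℂ) + z n‖) ≤ 2 ^ T * Real.exp (-(1/4) * ((T : ℝ) - M)) := by
    calc (∏ n, ‖(1:ℂ) + z n‖) ≤ ∏ n, 2 * Real.exp (((z n).re - 1) / 4) :=
          Finset.prod_le_prod (fun n _ => norm_nonneg _) (fun n _ => stmt13_aux (hnorm n))
      _ = 2 ^ T * Real.exp (∑ n, ((z n).re - 1) / 4) := by
          rw [Finset.prod_mul_distrib, Finset.prod_const, ← Real.exp_sum]
          simp
      _ ≤ 2 ^ T * Real.exp (-(1/4) * ((T : ℝ) - M)) := by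
          have : ∑ n, ((z n).re - 1) / 4 ≤ -(1/4) * ((T : ℝ) - M) := by
            rw [← Finset.sum_div, Finset.sum_sub_distrib, Finset.sum_const]
            simp only [Finset.card_univ, Fintype.card_fin, nsmul_eq_mul, mul_one]
            linarith [hMre]
          have := Real.exp_le_exp.mpr this
          have h2 : (0:ℝ) ≤ 2 ^ T := by positivity
          exact mul_le_mul_of_nonneg_left this h2
  refine ⟨key, fun hMhalf => ?_⟩
  refine key.trans ?_
  have : -(1/4 : ℝ) * ((T : ℝ) - M) ≤ -(1/4) * (T : ℝ) / 2 := by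
    nlinarith [hMhalf]
  have h2 : (0:ℝ) ≤ 2 ^ T := by positivity
  exact mul_le_mul_of_nonneg_left (Real.exp_le_exp.mpr this) h2
end

section
/- Let K ≥ 1 be a real number, T ≥ 1 an integer, γ_1,…,γ_T complex numbers with |γ_n| ≤ 1, and s_1 < … < s_T a strictly increasing sequence of nonnegative integers with s_T ≤ S. Then ∑_{k ≤ K} ∑*_{c mod k} |∑_{n ≤ T} γ_n e_k(c s_n)|² ≪ (K² + S)T, where ∑* denotes summation over c coprime to k, and e_k(z) = exp(2πi z/k). -/
open MeasureTheory Finset Complex intervalIntegral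

noncomputable def ev (m : ℕ) (x : ℝ) : ℂ := Complex.exp (2 * Real.pi * Complex.I * m * x)

lemma hasDerivAt_cexp_mul (c : ℂ) (x : ℝ) :
    HasDerivAt (fun y : ℝ => Complex.exp (c * y)) (c * Complex.exp (c * x)) x := by
  have h1 : HasDerivAt (fun y : ℝ => (c * (y : ℂ))) c x := by
    simpa using ((hasDerivAt_id (x : ℂ)).const_mul c).comp_ofReal
  simpa [mul_comm] using h1.cexp

lemma continuous_ev (m : ℕ) : Continuous (ev m) :=
  (continuous_const.mul Complex.continuous_ofReal).cexp

lemma ev_periodic (m : ℕ) : Function.Periodic (ev m) 1 := by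
  intro x
  rw [ev, ev]
  push_cast
  rw [mul_add, mul_one, Complex.exp_add]
  have h1 : Complex.exp (2 * Real.pi * Complex.I * m) = 1 := by
    have := Complex.exp_int_mul_two_pi_mul_I (m : ℤ)
    push_cast at this
    rw [← this]; ring_nf
  rw [h1, mul_one]

lemma hasDerivAt_ev (m : ℕ) (x : ℝ) :
    HasDerivAt (ev m) ((2 * Real.pi * Complex.I * m) * ev m x) x :=
  hasDerivAt_cexp_mul (2 * Real.pi * Complex.I * m) x

lemma integral_cexp_int (d : ℤ) :
    (∫ x in (0:ℝ)..1, Complex.exp (2 * Real.pi * Complex.I * d * x))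
      = if d = 0 then 1 else 0 := by
  rcases eq_or_ne d 0 with h | h
  · simp [h]
  · rw [if_neg h]
    have hc : (2 * Real.pi * Complex.I * d : ℂ) ≠ 0 := by
      simp [Real.pi_ne_zero, Complex.I_ne_zero, h]
    rw [integral_exp_mul_complex hc]
    have this : Complex.exp (2 * Real.pi * Complex.I * d * 1) = 1 := by
      rw [mul_one]
      have := Complex.exp_int_mul_two_pi_mul_I d
      rw [← this]; ring_nf
    rw [mul_one] at this
    simp [this, sub_self]

lemma ev_mul_conj (n m : ℕ) (x : ℝ) :
    ev n x * (starRingEnd ℂ) (ev m x)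
      = Complex.exp (2 * Real.pi * Complex.I * (((n : ℤ) - (m : ℤ) : ℤ) : ℂ) * x) := by
  rw [ev, ev, ← Complex.exp_conj, ← Complex.exp_add]
  congr 1
  have h2 : (starRingEnd ℂ) (2 * Real.pi * Complex.I * m * x)
      = -(2 * Real.pi * Complex.I * m * x) := by
    simp [map_mul, Complex.conj_ofReal, Complex.conj_I, map_ofNat]
  rw [h2]
  push_cast
  ring

lemma ortho (n m : ℕ) :
    (∫ x in (0:ℝ)..1, ev n x * (starRingEnd ℂ) (ev m x)) = if n = m then 1 else 0 := by
  have h : (∫ x in (0:ℝ)..1, ev n x * (starRingEnd ℂ) (ev m x))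
      = ∫ x in (0:ℝ)..1, Complex.exp (2 * Real.pi * Complex.I * (((n : ℤ) - (m : ℤ) : ℤ) : ℂ) * x) := by
    simp_rw [ev_mul_conj]
  rw [h, integral_cexp_int]
  have : ((n : ℤ) - m = 0) ↔ (n = m) := by omega
  simp [this]

lemma parseval (T : ℕ) (s : ℕ → ℕ) (hs : Set.InjOn s (Set.Icc 1 T)) (a : ℕ → ℂ) :
    (∫ x in (0:ℝ)..1, ‖∑ n ∈ Finset.Icc 1 T, a n * ev (s n) x‖ ^ 2)
      = ∑ n ∈ Finset.Icc 1 T, ‖a n‖ ^ 2 := by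
  set F : ℝ → ℂ := fun x => ∑ n ∈ Finset.Icc 1 T, a n * ev (s n) x with hF
  have expand : ∀ x : ℝ, F x * (starRingEnd ℂ) (F x)
      = ∑ n ∈ Finset.Icc 1 T, ∑ m ∈ Finset.Icc 1 T,
          (a n * (starRingEnd ℂ) (a m)) * (ev (s n) x * (starRingEnd ℂ) (ev (s m) x)) := by
    intro x
    rw [hF]
    simp only [map_sum, Finset.sum_mul_sum, map_mul]
    exact Finset.sum_congr rfl fun n _ => Finset.sum_congr rfl fun m _ => by ring
  have key : (∫ x in (0:ℝ)..1, F x * (starRingEnd ℂ) (F x))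
      = ∑ n ∈ Finset.Icc 1 T, ((‖a n‖ : ℂ)) ^ 2 := by
    simp_rw [expand]
    rw [intervalIntegral.integral_finset_sum]
    · have inner : ∀ n ∈ Finset.Icc 1 T,
          (∫ x in (0:ℝ)..1, ∑ m ∈ Finset.Icc 1 T,
            (a n * (starRingEnd ℂ) (a m)) * (ev (s n) x * (starRingEnd ℂ) (ev (s m) x)))
          = (‖a n‖ : ℂ) ^ 2 := by
        intro n hn
        rw [intervalIntegral.integral_finset_sum]
        · have term : ∀ m ∈ Finset.Icc 1 T,
              (∫ x in (0:ℝ)..1,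
                (a n * (starRingEnd ℂ) (a m)) * (ev (s n) x * (starRingEnd ℂ) (ev (s m) x)))
              = if s n = s m then a n * (starRingEnd ℂ) (a m) else 0 := by
            intro m hm
            rw [intervalIntegral.integral_const_mul, ortho]
            split_ifs <;> simp
          rw [Finset.sum_congr rfl term]
          have : ∀ m ∈ Finset.Icc 1 T,
              (if s n = s m then a n * (starRingEnd ℂ) (a m) else 0)
              = if m = n then a n * (starRingEnd ℂ) (a m) else 0 := by
            intro m hm
            congr 1
            simp only [eq_iff_iff]
            constructor
            · intro h
              exact (hs (by simpa [Set.mem_Icc] using Finset.mem_Icc.mp hm)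
                (by simpa [Set.mem_Icc] using Finset.mem_Icc.mp hn) h.symm)
            · intro h; rw [h]
          rw [Finset.sum_congr rfl this, Finset.sum_ite_eq' (Finset.Icc 1 T) n]
          rw [if_pos hn, Complex.mul_conj]
          rw [Complex.normSq_eq_norm_sq]
          push_cast
          rfl
        · intro m hm
          exact (continuous_const.mul ((continuous_ev _).mul
            (Complex.continuous_conj.comp (continuous_ev _)))).intervalIntegrable _ _
      exact Finset.sum_congr rfl inner
    · intro n hn
      apply Continuous.intervalIntegrable
      exact continuous_finset_sum _ fun m _ => continuous_const.mul
        ((continuous_ev _).mul (Complex.continuous_conj.comp (continuous_ev _)))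
  have ptfact : ∀ x : ℝ, ((‖F x‖ ^ 2 : ℝ) : ℂ) = F x * (starRingEnd ℂ) (F x) := by
    intro x
    rw [Complex.mul_conj, Complex.normSq_eq_norm_sq]
  have : ((∫ x in (0:ℝ)..1, ‖F x‖ ^ 2 : ℝ) : ℂ)
      = ((∑ n ∈ Finset.Icc 1 T, ‖a n‖ ^ 2 : ℝ) : ℂ) := by
    rw [← intervalIntegral.integral_ofReal]
    simp_rw [ptfact, key]
    push_cast
    rfl
  exact_mod_cast this

lemma gallagher {F G : ℝ → ℂ} (hFd : ∀ x, HasDerivAt F (G x) x)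
    (hFc : Continuous F) (hGc : Continuous G) {x a b : ℝ} (hab : a < b)
    (hxa : a ≤ x) (hxb : x ≤ b) :
    ‖F x‖ ^ 2 ≤ (b - a)⁻¹ * (∫ t in a..b, ‖F t‖ ^ 2)
      + ∫ t in a..b, 2 * (‖F t‖ * ‖G t‖) := by
  set g : ℝ → ℂ := fun t => F t * F t with hg
  set g' : ℝ → ℂ := fun t => G t * F t + F t * G t with hg'
  have hgd : ∀ t, HasDerivAt g (g' t) t := fun t => (hFd t).mul (hFd t)
  have hg'c : Continuous g' := ((hGc.mul hFc).add (hFc.mul hGc))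
  have hgc : Continuous (fun t => ‖g t‖) := (hFc.mul hFc).norm
  set C : ℝ := ∫ t in a..b, ‖g' t‖ with hC
  have step1 : ∀ t, a ≤ t → t ≤ b → ‖g x‖ ≤ ‖g t‖ + C := by
    intro t hta htb
    have ftc : (∫ u in t..x, g' u) = g x - g t :=
      intervalIntegral.integral_eq_sub_of_hasDerivAt (fun u _ => hgd u)
        (hg'c.intervalIntegrable _ _)
    have hb1 : ‖g x - g t‖ ≤ C := by
      rw [← ftc]
      refine le_trans (intervalIntegral.norm_integral_le_abs_integral_norm) ?_
      have hmono : |∫ u in t..x, ‖g' u‖| ≤ |∫ u in a..b, ‖g' u‖| := by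
        apply intervalIntegral.abs_integral_mono_interval
        · rw [Set.uIoc, Set.uIoc_of_le hab.le]
          exact Set.Ioc_subset_Ioc (le_min hta hxa) (max_le htb hxb)
        · filter_upwards with u using norm_nonneg _
        · exact hg'c.norm.intervalIntegrable _ _
      refine le_trans hmono ?_
      rw [_root_.abs_of_nonneg (intervalIntegral.integral_nonneg hab.le fun u _ => norm_nonneg (g' u))]
    calc ‖g x‖ = ‖g t + (g x - g t)‖ := by ring_nf
    _ ≤ ‖g t‖ + ‖g x - g t‖ := norm_add_le _ _
    _ ≤ ‖g t‖ + C := by linarith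
  have step2 : (b - a) * ‖g x‖ ≤ (∫ t in a..b, ‖g t‖) + (b - a) * C := by
    have h1 : (∫ (_ : ℝ) in a..b, ‖g x‖) = (b - a) * ‖g x‖ := by
      simp [smul_eq_mul, mul_comm]
    have h2 : (∫ t in a..b, ‖g x‖) ≤ ∫ t in a..b, (‖g t‖ + C) := by
      apply intervalIntegral.integral_mono_on hab.le
        (intervalIntegrable_const) ((hgc.add continuous_const).intervalIntegrable _ _)
      intro t ht
      exact step1 t ht.1 ht.2
    rw [h1] at h2
    rw [intervalIntegral.integral_add (hgc.intervalIntegrable _ _) intervalIntegrable_const,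
      intervalIntegral.integral_const, smul_eq_mul] at h2
    linarith
  have hba : (0:ℝ) < b - a := by linarith
  have step3 : ‖g x‖ ≤ (b - a)⁻¹ * (∫ t in a..b, ‖g t‖) + C := by
    have := mul_le_mul_of_nonneg_left step2 (le_of_lt (inv_pos.mpr hba))
    rw [mul_add, ← mul_assoc, ← mul_assoc, inv_mul_cancel₀ hba.ne', one_mul, one_mul] at this
    linarith
  have hnormg : ∀ t, ‖g t‖ = ‖F t‖ ^ 2 := by
    intro t; rw [hg]; simp [norm_mul, sq]
  have hCle : C ≤ ∫ t in a..b, 2 * (‖F t‖ * ‖G t‖) := by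
    apply intervalIntegral.integral_mono_on hab.le (hg'c.norm.intervalIntegrable _ _)
      ((continuous_const.mul (hFc.norm.mul hGc.norm)).intervalIntegrable _ _)
    intro t _
    calc ‖g' t‖ ≤ ‖G t * F t‖ + ‖F t * G t‖ := norm_add_le _ _
    _ = 2 * (‖F t‖ * ‖G t‖) := by simp [norm_mul]; ring
  have : (∫ t in a..b, ‖g t‖) = ∫ t in a..b, ‖F t‖ ^ 2 := by
    simp_rw [hnormg]
  rw [hnormg x, this] at step3
  have h4 : (b - a)⁻¹ * (∫ t in a..b, ‖F t‖ ^ 2) + C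
      ≤ (b - a)⁻¹ * (∫ t in a..b, ‖F t‖ ^ 2) + ∫ t in a..b, 2 * (‖F t‖ * ‖G t‖) := by
    linarith
  linarith

lemma sum_setIntegral_le {ι : Type*} [DecidableEq ι] (P : Finset ι) (p : ι → ℝ) (δ : ℝ)
    (hδ : 0 < δ) (hδ1 : δ ≤ 1)
    (hp : ∀ i ∈ P, p i ∈ Set.Ico (0:ℝ) 1)
    (hsep : ∀ i ∈ P, ∀ j ∈ P, i ≠ j → δ ≤ |p i - p j|)
    {H : ℝ → ℝ} (hH : Continuous H) (hH0 : ∀ t, 0 ≤ H t)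
    (hHp : Function.Periodic H 1) :
    (∑ i ∈ P, ∫ t in Set.Ioc (p i - δ/2) (p i + δ/2), H t)
      ≤ 2 * ∫ t in (0:ℝ)..1, H t := by
  have hdisj : Set.Pairwise (↑P) (Function.onFun Disjoint fun i => Set.Ioc (p i - δ/2) (p i + δ/2)) := by
    intro i hi j hj hij
    have h := hsep i hi j hj hij
    simp only [Function.onFun]
    rw [Set.Ioc_disjoint_Ioc]
    rcases le_total (p i) (p j) with hle | hle
    · rw [abs_of_nonpos (by linarith)] at h
      calc min (p i + δ/2) (p j + δ/2) ≤ p i + δ/2 := min_le_left _ _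
      _ ≤ p j - δ/2 := by linarith
      _ ≤ max (p i - δ/2) (p j - δ/2) := le_max_right _ _
    · rw [_root_.abs_of_nonneg (by linarith : (0:ℝ) ≤ p i - p j)] at h
      calc min (p i + δ/2) (p j + δ/2) ≤ p j + δ/2 := min_le_right _ _
      _ ≤ p i - δ/2 := by linarith
      _ ≤ max (p i - δ/2) (p j - δ/2) := le_max_left _ _
  have hInt : ∀ (a b : ℝ), IntegrableOn H (Set.Ioc a b) :=
    fun a b => (hH.integrableOn_Icc).mono_set Set.Ioc_subset_Icc_self
  rw [← MeasureTheory.integral_biUnion_finset P (fun i _ => measurableSet_Ioc) hdisj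
    (fun i _ => hInt _ _)]
  have hsub : (⋃ i ∈ P, Set.Ioc (p i - δ/2) (p i + δ/2)) ⊆ Set.Ioc (-(1:ℝ)/2) (3/2) := by
    intro t ht
    simp only [Set.mem_iUnion] at ht
    obtain ⟨i, hi, hti⟩ := ht
    have := hp i hi
    simp only [Set.mem_Ico] at this
    simp only [Set.mem_Ioc] at hti ⊢
    constructor <;> [linarith [hti.1]; linarith [hti.2]]
  have hbig : (∫ t in Set.Ioc (-(1:ℝ)/2) (3/2), H t) = 2 * ∫ t in (0:ℝ)..1, H t := by
    have h1 : (∫ t in Set.Ioc (-(1:ℝ)/2) (3/2), H t) = ∫ t in (-(1:ℝ)/2)..(3/2), H t := by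
      rw [intervalIntegral.integral_of_le (by norm_num)]
    have h2 : (∫ t in (-(1:ℝ)/2)..(3/2), H t)
        = (∫ t in (-(1:ℝ)/2)..(1/2), H t) + ∫ t in (1/2:ℝ)..(3/2), H t := by
      rw [intervalIntegral.integral_add_adjacent_intervals
        (hH.intervalIntegrable _ _) (hH.intervalIntegrable _ _)]
    have h3 : (∫ t in (-(1:ℝ)/2)..(1/2), H t) = ∫ t in (0:ℝ)..1, H t := by
      have := hHp.intervalIntegral_add_eq (-(1:ℝ)/2) 0
      norm_num at this ⊢
      convert this using 2 <;> norm_num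
    have h4 : (∫ t in (1/2:ℝ)..(3/2), H t) = ∫ t in (0:ℝ)..1, H t := by
      have := hHp.intervalIntegral_add_eq (1/2 : ℝ) 0
      norm_num at this ⊢
      convert this using 2 <;> norm_num
    rw [h1, h2, h3, h4]; ring
  rw [← hbig]
  apply MeasureTheory.setIntegral_mono_set (hInt _ _)
  · filter_upwards with t using hH0 t
  · exact (HasSubset.Subset.eventuallyLE hsub)

lemma farey_sep {N : ℕ} (hN : 1 ≤ N) {k k' c c' : ℕ}
    (hk1 : 1 ≤ k) (hkN : k ≤ N) (hk1' : 1 ≤ k') (hkN' : k' ≤ N)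
    (hc : c < k) (hc' : c' < k') (hcop : Nat.Coprime c k) (hcop' : Nat.Coprime c' k')
    (hne : ¬ (k = k' ∧ c = c')) :
    ((N:ℝ) ^ 2)⁻¹ ≤ |(c:ℝ)/k - (c':ℝ)/k'| := by
  have hkey : c * k' ≠ c' * k := by
    intro h
    apply hne
    have hdvd : k ∣ k' := by
      have : k ∣ c * k' := ⟨c', by rw [h, Nat.mul_comm]⟩
      exact (Nat.Coprime.dvd_of_dvd_mul_left (hcop.symm) this)
    have hdvd' : k' ∣ k := by
      have : k' ∣ c' * k := ⟨c, by rw [← h, Nat.mul_comm]⟩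
      exact (Nat.Coprime.dvd_of_dvd_mul_left (hcop'.symm) this)
    have hkk : k = k' := Nat.dvd_antisymm hdvd hdvd'
    refine ⟨hkk, ?_⟩
    subst hkk
    exact Nat.eq_of_mul_eq_mul_right (by omega) h
  have hk0 : (0:ℝ) < k := by exact_mod_cast hk1
  have hk0' : (0:ℝ) < k' := by exact_mod_cast hk1'
  have hone : (1:ℝ) ≤ |(c:ℝ) * k' - (k:ℝ) * c'| := by
    have hz : ((c:ℤ) * k' - (k:ℤ) * c') ≠ 0 := by
      intro h
      apply hkey
      have : (c:ℤ) * k' = (k:ℤ) * c' := sub_eq_zero.mp h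
      exact_mod_cast this.trans (Int.mul_comm _ _)
    have := Int.one_le_abs hz
    calc (1:ℝ) ≤ |((c:ℤ) * k' - (k:ℤ) * c' : ℤ)| := by exact_mod_cast this
    _ = |(c:ℝ) * k' - (k:ℝ) * c'| := by push_cast; rfl
  have heq : |(c:ℝ)/k - (c':ℝ)/k'| = |(c:ℝ) * k' - (k:ℝ) * c'| / (k * k') := by
    rw [div_sub_div _ _ (ne_of_gt hk0) (ne_of_gt hk0'), abs_div,
      abs_of_pos (show (0:ℝ) < (k:ℝ) * k' by positivity)]
  rw [heq]
  have h1 : (k:ℝ) ≤ N := by exact_mod_cast hkN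
  have h2 : (k':ℝ) ≤ N := by exact_mod_cast hkN'
  calc ((N:ℝ)^2)⁻¹ = 1 / ((N:ℝ) * N) := by rw [sq]; rw [one_div]
  _ ≤ 1 / ((k:ℝ) * k') := by gcongr <;> positivity
  _ ≤ |(c:ℝ) * k' - (k:ℝ) * c'| / (k * k') := by gcongr


set_option maxHeartbeats 2000000 in
/-- Large sieve inequality: `∑_{k ≤ K} ∑*_{c mod k} |∑_{n ≤ T} γ_n e_k(c s_n)|² ≪ (K² + S)T`. -/
theorem stmt14 : ∃ C : ℝ, 0 < C ∧ ∀ (K : ℝ) (T S : ℕ) (γ : ℕ → ℂ) (s : ℕ → ℕ),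
    1 ≤ K → 1 ≤ T → StrictMonoOn s (Set.Icc 1 T) → (∀ n ∈ Set.Icc 1 T, s n ≤ S) →
    (∀ n, ‖γ n‖ ≤ 1) →
    ∑ k ∈ Finset.Icc 1 ⌊K⌋₊, ∑ c ∈ (Finset.range k).filter (fun c => Nat.Coprime c k),
        ‖∑ n ∈ Finset.Icc 1 T,
            γ n * Complex.exp (2 * Real.pi * Complex.I * ((c * s n : ℕ) : ℂ) / k)‖ ^ 2
      ≤ C * (K ^ 2 + (S : ℝ)) * (T : ℝ) := by
  refine ⟨100, by norm_num, ?_⟩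
  intro K T S γ s hK hT hmono hsS hγ
  set N := ⌊K⌋₊ with hNdef
  have hN1 : 1 ≤ N := Nat.le_floor (by exact_mod_cast hK)
  have hNK : (N : ℝ) ≤ K := Nat.floor_le (by linarith)
  have hNpos : (0:ℝ) < N := by exact_mod_cast hN1
  have hN1R : (1:ℝ) ≤ N := by exact_mod_cast hN1
  set δ : ℝ := ((N:ℝ)^2)⁻¹ with hδdef
  have hδpos : 0 < δ := by positivity
  have hδ1 : δ ≤ 1 := by
    rw [hδdef]
    rw [inv_le_one_iff₀]
    right
    nlinarith [hN1R]
  set F : ℝ → ℂ := fun x => ∑ n ∈ Finset.Icc 1 T, γ n * ev (s n) x with hF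
  set G : ℝ → ℂ := fun x => ∑ n ∈ Finset.Icc 1 T,
      (γ n * (2 * Real.pi * Complex.I * (s n : ℂ))) * ev (s n) x with hG
  have hFc : Continuous F := continuous_finset_sum _ fun n _ =>
    continuous_const.mul (continuous_ev _)
  have hGc : Continuous G := continuous_finset_sum _ fun n _ =>
    continuous_const.mul (continuous_ev _)
  have hFd : ∀ x, HasDerivAt F (G x) x := by
    intro x
    apply HasDerivAt.fun_sum
    intro n _
    have h := (hasDerivAt_ev (s n) x).const_mul (γ n)
    exact h.congr_deriv (by ring)
  have hFper : Function.Periodic F 1 := by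
    intro x
    simp only [hF]
    exact Finset.sum_congr rfl fun n _ => by rw [ev_periodic (s n) x]
  have hGper : Function.Periodic G 1 := by
    intro x
    simp only [hG]
    exact Finset.sum_congr rfl fun n _ => by rw [ev_periodic (s n) x]
  set H : ℝ → ℝ := fun t => δ⁻¹ * ‖F t‖^2 + 2 * (‖F t‖ * ‖G t‖) with hH
  have hHc : Continuous H := ((continuous_const.mul ((hFc.norm).pow 2)).add
    (continuous_const.mul ((hFc.norm).mul (hGc.norm))))
  have hH0 : ∀ t, 0 ≤ H t := by intro t; positivity
  have hHper : Function.Periodic H 1 := by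
    intro x
    simp only [hH, hFper x, hGper x]
  -- per-point Gallagher bound
  have hgal : ∀ x : ℝ, ‖F x‖^2 ≤ ∫ t in Set.Ioc (x - δ/2) (x + δ/2), H t := by
    intro x
    have hab : x - δ/2 < x + δ/2 := by linarith
    have h := gallagher hFd hFc hGc (x := x) hab (by linarith) (by linarith)
    have hba : (x + δ/2) - (x - δ/2) = δ := by ring
    rw [hba] at h
    have hsplit : (∫ t in (x - δ/2)..(x + δ/2), H t)
        = δ⁻¹ * (∫ t in (x - δ/2)..(x + δ/2), ‖F t‖^2)
          + ∫ t in (x - δ/2)..(x + δ/2), 2 * (‖F t‖ * ‖G t‖) := by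
      rw [hH]
      rw [intervalIntegral.integral_add (f := fun t => δ⁻¹ * ‖F t‖^2)
        (g := fun t => 2 * (‖F t‖ * ‖G t‖))
        ((continuous_const.mul ((hFc.norm).pow 2)).intervalIntegrable _ _)
        ((continuous_const.mul ((hFc.norm).mul (hGc.norm))).intervalIntegrable _ _)]
      rw [intervalIntegral.integral_const_mul]
    rw [← intervalIntegral.integral_of_le hab.le, hsplit]
    exact h
  -- sum over Farey arcs
  set P := (Finset.Icc 1 N).sigma
      (fun k => (Finset.range k).filter (fun c => Nat.Coprime c k)) with hP
  set p : (Σ _ : ℕ, ℕ) → ℝ := fun i => (i.2 : ℝ) / i.1 with hp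
  have harcs : (∑ i ∈ P, ∫ t in Set.Ioc (p i - δ/2) (p i + δ/2), H t)
      ≤ 2 * ∫ t in (0:ℝ)..1, H t := by
    apply sum_setIntegral_le P p δ hδpos hδ1 _ _ hHc hH0 hHper
    · intro i hi
      rw [hP, Finset.mem_sigma] at hi
      obtain ⟨hi1, hi2⟩ := hi
      rw [Finset.mem_filter, Finset.mem_range] at hi2
      rw [Finset.mem_Icc] at hi1
      have h1 : (0:ℝ) < i.1 := by exact_mod_cast Nat.lt_of_lt_of_le Nat.zero_lt_one hi1.1
      constructor
      · positivity
      · rw [hp, div_lt_one h1]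
        exact_mod_cast hi2.1
    · intro i hi j hj hij
      rw [hP, Finset.mem_sigma] at hi hj
      obtain ⟨hi1, hi2⟩ := hi
      obtain ⟨hj1, hj2⟩ := hj
      rw [Finset.mem_filter, Finset.mem_range] at hi2 hj2
      rw [Finset.mem_Icc] at hi1 hj1
      rw [hδdef, hp]
      apply farey_sep hN1 hi1.1 hi1.2 hj1.1 hj1.2 hi2.1 hj2.1 hi2.2 hj2.2
      intro ⟨h1, h2⟩
      exact hij (Sigma.ext h1 (heq_of_eq h2))
  -- rewrite inner sums
  have hinner : ∀ k ∈ Finset.Icc 1 N, ∀ c : ℕ,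
      (∑ n ∈ Finset.Icc 1 T,
          γ n * Complex.exp (2 * Real.pi * Complex.I * ((c * s n : ℕ):ℂ) / k))
        = F ((c:ℝ)/k) := by
    intro k hk c
    rw [Finset.mem_Icc] at hk
    have hk0 : (k:ℂ) ≠ 0 := Nat.cast_ne_zero.mpr (by omega)
    simp only [hF]
    apply Finset.sum_congr rfl
    intro n _
    congr 1
    rw [ev]
    congr 1
    push_cast
    field_simp
  -- Parseval data
  set Sig : ℝ := ∑ n ∈ Finset.Icc 1 T, ‖γ n‖^2 with hSig
  have hinj : Set.InjOn s (Set.Icc 1 T) := hmono.injOn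
  have hpars1 : (∫ x in (0:ℝ)..1, ‖F x‖^2) = Sig := parseval T s hinj γ
  set E : ℝ := ∑ n ∈ Finset.Icc 1 T, ‖γ n * (2 * Real.pi * Complex.I * (s n : ℂ))‖^2 with hE
  have hpars2 : (∫ x in (0:ℝ)..1, ‖G x‖^2) = E :=
    parseval T s hinj (fun n => γ n * (2 * Real.pi * Complex.I * (s n : ℂ)))
  have hpi := Real.pi_pos
  set L : ℝ := 2 * Real.pi * (S + 1) with hL
  have hLpos : 0 < L := by positivity
  have hAM : ∀ t : ℝ, 2 * (‖F t‖ * ‖G t‖) ≤ L * ‖F t‖^2 + L⁻¹ * ‖G t‖^2 := by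
    intro t
    rw [inv_mul_eq_div, ← sub_le_iff_le_add', le_div_iff₀ hLpos]
    nlinarith [sq_nonneg (L * ‖F t‖ - ‖G t‖)]
  have hI2 : (∫ t in (0:ℝ)..1, 2 * (‖F t‖ * ‖G t‖)) ≤ L * Sig + L⁻¹ * E := by
    have h1 : (∫ t in (0:ℝ)..1, 2 * (‖F t‖ * ‖G t‖))
        ≤ ∫ t in (0:ℝ)..1, (L * ‖F t‖^2 + L⁻¹ * ‖G t‖^2) := by
      apply intervalIntegral.integral_mono_on (by norm_num)
        ((continuous_const.mul ((hFc.norm).mul (hGc.norm))).intervalIntegrable _ _)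
        (((continuous_const.mul ((hFc.norm).pow 2)).add
          (continuous_const.mul ((hGc.norm).pow 2))).intervalIntegrable _ _)
      intro t _
      exact hAM t
    rw [intervalIntegral.integral_add (f := fun t => L * ‖F t‖^2)
        (g := fun t => L⁻¹ * ‖G t‖^2)
        ((continuous_const.mul ((hFc.norm).pow 2)).intervalIntegrable _ _)
        ((continuous_const.mul ((hGc.norm).pow 2)).intervalIntegrable _ _)] at h1
    simp only [intervalIntegral.integral_const_mul] at h1 ⊢
    rw [hpars1, hpars2] at h1
    exact h1
  have hIH : (∫ t in (0:ℝ)..1, H t) ≤ δ⁻¹ * Sig + (L * Sig + L⁻¹ * E) := by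
    have hsplit : (∫ t in (0:ℝ)..1, H t)
        = δ⁻¹ * (∫ t in (0:ℝ)..1, ‖F t‖^2) + ∫ t in (0:ℝ)..1, 2 * (‖F t‖ * ‖G t‖) := by
      rw [hH]
      rw [intervalIntegral.integral_add (f := fun t => δ⁻¹ * ‖F t‖^2)
        (g := fun t => 2 * (‖F t‖ * ‖G t‖))
        ((continuous_const.mul ((hFc.norm).pow 2)).intervalIntegrable _ _)
        ((continuous_const.mul ((hFc.norm).mul (hGc.norm))).intervalIntegrable _ _),
        intervalIntegral.integral_const_mul]
    rw [hsplit, hpars1]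
    have := hI2
    linarith
  -- bound E
  have hEbound : E ≤ (2 * Real.pi * S)^2 * Sig := by
    rw [hE, hSig, Finset.mul_sum]
    apply Finset.sum_le_sum
    intro n hn
    have hsn : (s n : ℝ) ≤ S := by
      exact_mod_cast hsS n (by simpa [Set.mem_Icc] using Finset.mem_Icc.mp hn)
    have hnorm : ‖(2 * Real.pi * Complex.I * (s n : ℂ) : ℂ)‖ = 2 * Real.pi * (s n : ℝ) := by
      simp [norm_mul, Complex.norm_I, Complex.norm_real, abs_of_pos hpi]
    rw [norm_mul, hnorm, mul_pow]
    rw [mul_comm ((2 * Real.pi * (S:ℝ))^2) _]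
    apply mul_le_mul_of_nonneg_left _ (by positivity)
    have h0 : 0 ≤ 2 * Real.pi * (s n : ℝ) := by positivity
    apply pow_le_pow_left₀ h0
    nlinarith
  have hSigT : Sig ≤ T := by
    rw [hSig]
    calc ∑ n ∈ Finset.Icc 1 T, ‖γ n‖^2 ≤ ∑ n ∈ Finset.Icc 1 T, 1 := by
          apply Finset.sum_le_sum
          intro n _
          exact pow_le_one₀ (norm_nonneg _) (hγ n)
    _ = (T:ℝ) := by simp
  have hSigpos : 0 ≤ Sig := Finset.sum_nonneg fun n _ => by positivity
  -- final numeric bound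
  have hcoef1 : δ⁻¹ ≤ K^2 := by
    rw [hδdef, inv_inv]
    nlinarith [hNK, hNpos]
  have hcoef2 : L⁻¹ * (2 * Real.pi * S)^2 ≤ 2 * Real.pi * S := by
    rw [inv_mul_eq_div, div_le_iff₀ hLpos, sq]
    have hS0 : (0:ℝ) ≤ S := Nat.cast_nonneg _
    apply mul_le_mul_of_nonneg_left _ (by positivity)
    rw [hL]
    nlinarith [hpi]
  have hfinal : 2 * (∫ t in (0:ℝ)..1, H t) ≤ 100 * (K^2 + S) * T := by
    have h1 : L⁻¹ * E ≤ 2 * Real.pi * S * Sig := by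
      calc L⁻¹ * E ≤ L⁻¹ * ((2 * Real.pi * S)^2 * Sig) := by
            apply mul_le_mul_of_nonneg_left hEbound (le_of_lt (inv_pos.mpr hLpos))
      _ = (L⁻¹ * (2 * Real.pi * S)^2) * Sig := by ring
      _ ≤ 2 * Real.pi * S * Sig := mul_le_mul_of_nonneg_right hcoef2 hSigpos
    have h2 : (∫ t in (0:ℝ)..1, H t) ≤ (K^2 + L + 2 * Real.pi * S) * Sig := by
      calc (∫ t in (0:ℝ)..1, H t) ≤ δ⁻¹ * Sig + (L * Sig + L⁻¹ * E) := hIH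
      _ ≤ K^2 * Sig + (L * Sig + 2 * Real.pi * S * Sig) := by
          have := mul_le_mul_of_nonneg_right hcoef1 hSigpos
          linarith
      _ = (K^2 + L + 2 * Real.pi * S) * Sig := by ring
    have hS0 : (0:ℝ) ≤ S := Nat.cast_nonneg _
    have hT1 : (1:ℝ) ≤ T := by exact_mod_cast hT
    have hpile : Real.pi ≤ 4 := Real.pi_le_four
    have hcoefpos : (0:ℝ) ≤ K^2 + L + 2 * Real.pi * S := by positivity
    have h3 : (K^2 + L + 2 * Real.pi * S) * Sig ≤ (K^2 + L + 2 * Real.pi * S) * T :=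
      mul_le_mul_of_nonneg_left hSigT hcoefpos
    have h4 : 2 * (K^2 + L + 2 * Real.pi * S) ≤ 100 * (K^2 + S) := by
      rw [hL]
      have hK2 : (1:ℝ) ≤ K^2 := by nlinarith [hK]
      nlinarith [hpile, hpi, hS0, hK2]
    calc 2 * (∫ t in (0:ℝ)..1, H t) ≤ 2 * ((K^2 + L + 2 * Real.pi * S) * T) := by linarith
    _ = (2 * (K^2 + L + 2 * Real.pi * S)) * T := by ring
    _ ≤ (100 * (K^2 + S)) * T := mul_le_mul_of_nonneg_right h4 (by positivity)
    _ = 100 * (K^2 + S) * T := by ring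
  -- chain everything
  calc ∑ k ∈ Finset.Icc 1 N, ∑ c ∈ (Finset.range k).filter (fun c => Nat.Coprime c k),
        ‖∑ n ∈ Finset.Icc 1 T,
            γ n * Complex.exp (2 * Real.pi * Complex.I * ((c * s n : ℕ) : ℂ) / k)‖ ^ 2
      = ∑ k ∈ Finset.Icc 1 N, ∑ c ∈ (Finset.range k).filter (fun c => Nat.Coprime c k),
          ‖F ((c:ℝ)/k)‖^2 := by
        apply Finset.sum_congr rfl
        intro k hk
        apply Finset.sum_congr rfl
        intro c _
        rw [hinner k hk c]
    _ ≤ ∑ k ∈ Finset.Icc 1 N, ∑ c ∈ (Finset.range k).filter (fun c => Nat.Coprime c k),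
          ∫ t in Set.Ioc ((c:ℝ)/k - δ/2) ((c:ℝ)/k + δ/2), H t := by
        apply Finset.sum_le_sum
        intro k _
        apply Finset.sum_le_sum
        intro c _
        exact hgal _
    _ = ∑ i ∈ P, ∫ t in Set.Ioc (p i - δ/2) (p i + δ/2), H t := by
        rw [hP, hp]
        exact Finset.sum_sigma' _ _ _
    _ ≤ 2 * ∫ t in (0:ℝ)..1, H t := harcs
    _ ≤ 100 * (K^2 + S) * T := hfinal
end
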